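/- arXiv:1904.04897 — 2 statements merged into one kernel-verified Lean document; each statement's English description precedes it below -/
import Mathlib

section
/- Let η : ℤ² → A whose range is A (|A| ≥ 2) and suppose there exists a nonempty finite convex set U ⊂ ℤ² with P_η(U) ≤ (1/2)|U| + |A| - 1. Then any convex set S ⊆ U minimal among convex T ⊆ U satisfying P_η(T) ≤ (1/2)|T| + |A| - 1 exists, has at least two points, and is an η-generating set. Moreover, if η is aperiodic, the convex hull of S has positive area. -/
set_option linter.unusedSectionVars false
set_option linter.unreachableTactic false
set_option linter.unusedTactic false

/-- The number of distinct `S`-patterns of a configuration `η : ℤ² → A`. -/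
noncomputable def patternCount {A : Type*} (η : ℤ × ℤ → A) (S : Finset (ℤ × ℤ)) : ℕ :=
  Set.ncard {w : (↥S) → A | ∃ u : ℤ × ℤ, ∀ s : ↥S, w s = η (u + (s : ℤ × ℤ))}

/-- The canonical embedding of the lattice `ℤ²` into `ℝ²`. -/
def emb (g : ℤ × ℤ) : ℝ × ℝ := ((g.1 : ℝ), (g.2 : ℝ))

/-- A finite subset of `ℤ²` is (lattice) convex if it contains every lattice point of its
real convex hull. -/
def IsLatticeConvex (S : Finset (ℤ × ℤ)) : Prop :=
  ∀ g : ℤ × ℤ, emb g ∈ convexHull ℝ (emb '' (S : Set (ℤ × ℤ))) → g ∈ S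

lemma patternSet_finite {A : Type*} [Fintype A] (η : ℤ × ℤ → A) (S : Finset (ℤ × ℤ)) :
    {w : (↥S) → A | ∃ u : ℤ × ℤ, ∀ s : ↥S, w s = η (u + (s : ℤ × ℤ))}.Finite :=
  Set.toFinite _

lemma patternCount_mono {A : Type*} [Fintype A] (η : ℤ × ℤ → A) {T S : Finset (ℤ × ℤ)}
    (hTS : T ⊆ S) : patternCount η T ≤ patternCount η S := by
  classical
  set PS := {w : (↥S) → A | ∃ u : ℤ × ℤ, ∀ s : ↥S, w s = η (u + (s : ℤ × ℤ))}
  set PT := {w : (↥T) → A | ∃ u : ℤ × ℤ, ∀ s : ↥T, w s = η (u + (s : ℤ × ℤ))}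
  have hr : PT ⊆ (fun (w : ↥S → A) (t : ↥T) => w ⟨(t : ℤ × ℤ), hTS t.2⟩) '' PS := by
    rintro w ⟨u, hu⟩
    refine ⟨fun s => η (u + (s : ℤ × ℤ)), ⟨u, fun s => rfl⟩, ?_⟩
    funext t
    exact (hu t).symm
  calc PT.ncard ≤ _ := Set.ncard_le_ncard hr ((patternSet_finite η S).image _)
    _ ≤ PS.ncard := Set.ncard_image_le (patternSet_finite η S)

lemma patternCount_singleton {A : Type*} [Fintype A] (η : ℤ × ℤ → A)
    (hsurj : Function.Surjective η) (g : ℤ × ℤ) :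
    patternCount η {g} = Fintype.card A := by
  classical
  have huniv : {w : (↥({g} : Finset (ℤ × ℤ))) → A |
      ∃ u : ℤ × ℤ, ∀ s : ↥({g} : Finset (ℤ × ℤ)), w s = η (u + (s : ℤ × ℤ))} = Set.univ := by
    ext w
    simp only [Set.mem_setOf_eq, Set.mem_univ, iff_true]
    obtain ⟨u0, hu0⟩ := hsurj (w ⟨g, Finset.mem_singleton_self g⟩)
    refine ⟨u0 - g, fun s => ?_⟩
    have hs : (s : ℤ × ℤ) = g := Finset.mem_singleton.mp s.2
    have : s = (⟨g, Finset.mem_singleton_self g⟩ : ↥({g} : Finset (ℤ × ℤ))) :=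
      Subtype.ext hs
    rw [this]
    simp only [← hu0]
    congr 1
    simp
  rw [patternCount, huniv, Set.ncard_univ, Nat.card_eq_fintype_card, Fintype.card_fun]
  simp

lemma emb_add (a b : ℤ × ℤ) : emb (a + b) = emb a + emb b := by
  simp [emb, Prod.ext_iff]

lemma emb_zsmul (t : ℤ) (a : ℤ × ℤ) : emb (t • a) = (t : ℝ) • emb a := by
  simp [emb, Prod.ext_iff]

lemma emb_inj : Function.Injective emb := by
  intro a b h
  simp only [emb, Prod.ext_iff] at h
  exact Prod.ext (by exact_mod_cast h.1) (by exact_mod_cast h.2)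

private lemma exists_t {e1 e2 x y : ℤ} (hcop : Int.gcd e1 e2 = 1) (hcross : x * e2 = y * e1) :
    ∃ t : ℤ, x = t * e1 ∧ y = t * e2 := by
  rcases eq_or_ne e1 0 with h1 | h1
  · subst h1
    have he2 : e2 = 1 ∨ e2 = -1 := by
      have : e2.natAbs = 1 := by simpa [Int.gcd] using hcop
      rcases Int.natAbs_eq e2 with h | h <;> omega
    have hx : x = 0 := by
      have he2' : e2 ≠ 0 := by rcases he2 with h | h <;> omega
      have : x * e2 = 0 := by omega
      exact (mul_eq_zero.mp this).resolve_right he2'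
    refine ⟨y * e2, by simp [hx], ?_⟩
    rcases he2 with h | h <;> subst h <;> ring
  · have hco : IsCoprime e1 e2 := Int.isCoprime_iff_gcd_eq_one.mpr hcop
    have hdvd : e1 ∣ x := hco.dvd_of_dvd_mul_right ⟨y, by linarith⟩
    obtain ⟨t, ht⟩ := hdvd
    refine ⟨t, by rw [ht]; ring, ?_⟩
    have : e1 * y = e1 * (t * e2) := by
      calc e1 * y = y * e1 := by ring
        _ = x * e2 := hcross.symm
        _ = e1 * t * e2 := by rw [ht]
        _ = e1 * (t * e2) := by ring
    exact mul_left_cancel₀ h1 this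

lemma collinear_convex_struct (S : Finset (ℤ × ℤ)) (hconv : IsLatticeConvex S)
    (hcol : Collinear ℝ (emb '' (S : Set (ℤ × ℤ)))) (hcard : 2 ≤ S.card) :
    ∃ (a e : ℤ × ℤ) (n : ℕ), e ≠ 0 ∧ n = S.card ∧
      S = (Finset.range n).image (fun t : ℕ => a + (t : ℤ) • e) := by
  classical
  obtain ⟨p, hp, q, hq, hpq⟩ := Finset.one_lt_card.mp hcard
  set d0 : ℤ × ℤ := q - p with hd0def
  have hd0 : d0 ≠ 0 := sub_ne_zero.mpr (Ne.symm hpq)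
  set g : ℕ := Int.gcd d0.1 d0.2 with hgdef
  have hg : 0 < g := by
    rw [hgdef, Int.gcd_pos_iff]
    by_contra hcon
    push_neg at hcon
    exact hd0 (Prod.ext hcon.1 hcon.2)
  set e : ℤ × ℤ := (d0.1 / g, d0.2 / g) with hedef
  have hcop : Int.gcd e.1 e.2 = 1 := Int.gcd_div_gcd_div_gcd hg
  have hd0e : d0 = (g : ℤ) • e := by
    apply Prod.ext
    · show d0.1 = (g : ℤ) * (d0.1 / g)
      exact (Int.mul_ediv_cancel' (Int.gcd_dvd_left _ _)).symm
    · show d0.2 = (g : ℤ) * (d0.2 / g)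
      exact (Int.mul_ediv_cancel' (Int.gcd_dvd_right _ _)).symm
  have he : e ≠ 0 := by
    intro h
    apply hd0
    rw [hd0e, h, smul_zero]
  -- every point of S is p + t • e
  have hpar : ∀ s ∈ S, ∃ t : ℤ, s = p + t • e := by
    intro s hs
    obtain ⟨v, hv⟩ := (collinear_iff_of_mem (Set.mem_image_of_mem emb hp)).mp hcol
    obtain ⟨rq, hrq⟩ := hv (emb q) (Set.mem_image_of_mem emb hq)
    obtain ⟨rs, hrs⟩ := hv (emb s) (Set.mem_image_of_mem emb hs)
    -- cross product over ℝ
    have hcross_r : ((s.1 : ℝ) - p.1) * ((q.2 : ℝ) - p.2) = ((s.2 : ℝ) - p.2) * ((q.1 : ℝ) - p.1) := by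
      have h1 : (q.1 : ℝ) - p.1 = rq * v.1 := by
        have := congrArg Prod.fst hrq; simp [emb] at this ⊢; linarith
      have h2 : (q.2 : ℝ) - p.2 = rq * v.2 := by
        have := congrArg Prod.snd hrq; simp [emb] at this ⊢; linarith
      have h3 : (s.1 : ℝ) - p.1 = rs * v.1 := by
        have := congrArg Prod.fst hrs; simp [emb] at this ⊢; linarith
      have h4 : (s.2 : ℝ) - p.2 = rs * v.2 := by
        have := congrArg Prod.snd hrs; simp [emb] at this ⊢; linarith
      rw [h1, h2, h3, h4]; ring
    have hcross : (s.1 - p.1) * (q.2 - p.2) = (s.2 - p.2) * (q.1 - p.1) := by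
      exact_mod_cast hcross_r
    -- replace q - p by g • e
    have hq1 : q.1 - p.1 = (g : ℤ) * e.1 := congrArg Prod.fst hd0e
    have hq2 : q.2 - p.2 = (g : ℤ) * e.2 := congrArg Prod.snd hd0e
    have hcross2 : (s.1 - p.1) * e.2 = (s.2 - p.2) * e.1 := by
      have hgne : (g : ℤ) ≠ 0 := by exact_mod_cast hg.ne'
      apply mul_left_cancel₀ hgne
      rw [hq1, hq2] at hcross
      linarith [hcross]
    obtain ⟨t, ht1, ht2⟩ := exists_t hcop hcross2
    exact ⟨t, Prod.ext (by simpa using (by omega : s.1 = p.1 + t * e.1))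
      (by simpa using (by omega : s.2 = p.2 + t * e.2))⟩
  -- the coordinate of a point along the line
  set f : ℤ × ℤ → ℤ := fun s => if e.1 = 0 then (s.2 - p.2) / e.2 else (s.1 - p.1) / e.1
    with hfdef
  have hfcomp : ∀ t : ℤ, f (p + t • e) = t := by
    intro t
    have h1 : (p + t • e).1 - p.1 = t * e.1 := by
      simp [Prod.smul_def]
    have h2 : (p + t • e).2 - p.2 = t * e.2 := by
      simp [Prod.smul_def]
    by_cases h : e.1 = 0
    · have he2 : e.2 ≠ 0 := fun h2' => he (Prod.ext h h2')
      show (if e.1 = 0 then ((p + t • e).2 - p.2) / e.2 else ((p + t • e).1 - p.1) / e.1) = t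
      rw [if_pos h, h2]
      exact Int.mul_ediv_cancel t he2
    · show (if e.1 = 0 then ((p + t • e).2 - p.2) / e.2 else ((p + t • e).1 - p.1) / e.1) = t
      rw [if_neg h, h1]
      exact Int.mul_ediv_cancel t h
  have hfS : ∀ s ∈ S, s = p + f s • e := by
    intro s hs
    obtain ⟨t, ht⟩ := hpar s hs
    rw [ht, hfcomp]
  set I := S.image f with hIdef
  have hIne : I.Nonempty := ⟨f p, Finset.mem_image_of_mem f hp⟩
  set m := I.min' hIne with hmdef
  set M := I.max' hIne with hMdef
  have hmM : m ≤ M := Finset.min'_le I _ (I.max'_mem hIne)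
  -- all intermediate points belong to S by lattice convexity
  have hmem : ∀ t : ℤ, m ≤ t → t ≤ M → p + t • e ∈ S := by
    intro t h1 h2
    obtain ⟨sm, hsm, hsmf⟩ := Finset.mem_image.mp (I.min'_mem hIne)
    obtain ⟨sM, hsM, hsMf⟩ := Finset.mem_image.mp (I.max'_mem hIne)
    have hsm' : sm = p + m • e := by rw [hmdef, ← hsmf]; exact hfS sm hsm
    have hsM' : sM = p + M • e := by rw [hMdef, ← hsMf]; exact hfS sM hsM
    by_cases hmM' : m = M
    · have : t = m := by omega
      rw [this, ← hsm']
      exact hsm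
    · have hlt : m < M := lt_of_le_of_ne hmM hmM'
      apply hconv
      have hden : (0 : ℝ) < (M : ℝ) - m := by
        have : (m : ℝ) < M := by exact_mod_cast hlt
        linarith
      set lam : ℝ := ((t : ℝ) - m) / ((M : ℝ) - m) with hlam
      have hlam0 : 0 ≤ lam := by
        apply div_nonneg _ hden.le
        have : (m : ℝ) ≤ t := by exact_mod_cast h1
        linarith
      have hlam1 : lam ≤ 1 := by
        rw [hlam, div_le_one hden]
        have : (t : ℝ) ≤ M := by exact_mod_cast h2
        linarith
      apply segment_subset_convexHull (Set.mem_image_of_mem emb hsm)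
        (Set.mem_image_of_mem emb hsM)
      refine ⟨1 - lam, lam, by linarith, hlam0, by ring, ?_⟩
      simp only [hsm', hsM', emb_add, emb_zsmul]
      have hscal : (1 - lam) * (m : ℝ) + lam * (M : ℝ) = (t : ℝ) := by
        rw [hlam]
        field_simp
        ring
      calc (1 - lam) • (emb p + (m : ℝ) • emb e) + lam • (emb p + (M : ℝ) • emb e)
          = ((1 - lam) + lam) • emb p + ((1 - lam) * (m : ℝ) + lam * (M : ℝ)) • emb e := by
            module
        _ = emb p + (t : ℝ) • emb e := by
            rw [hscal, (by ring : (1 - lam) + lam = (1:ℝ)), one_smul]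
  set n := (M - m).toNat + 1 with hndef
  have hinj : Function.Injective (fun t : ℕ => (p + m • e) + (t : ℤ) • e) := by
    intro a b hab
    simp only at hab
    have h0 : ((a : ℤ) - b) • e = 0 := by
      have := sub_eq_zero.mpr hab
      rw [sub_smul]
      rw [(by abel : (p + m • e) + (a:ℤ) • e - ((p + m • e) + (b:ℤ) • e) = (a:ℤ) • e - (b:ℤ) • e)] at this
      exact this
    rcases smul_eq_zero.mp h0 with h | h
    · omega
    · exact absurd h he
  have hSeq : S = (Finset.range n).image (fun t : ℕ => (p + m • e) + (t : ℤ) • e) := by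
    ext x
    simp only [Finset.mem_image, Finset.mem_range]
    constructor
    · intro hx
      have hx' := hfS x hx
      have h1 : m ≤ f x := Finset.min'_le I _ (Finset.mem_image_of_mem f hx)
      have h2 : f x ≤ M := Finset.le_max' I _ (Finset.mem_image_of_mem f hx)
      refine ⟨(f x - m).toNat, by omega, ?_⟩
      have hc : (((f x - m).toNat : ℤ)) = f x - m := Int.toNat_of_nonneg (by omega)
      rw [hc]
      conv_rhs => rw [hx']
      module
    · rintro ⟨kk, hkk, rfl⟩
      have hrw : p + m • e + (kk : ℤ) • e = p + (m + (kk : ℤ)) • e := by module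
      rw [hrw]
      exact hmem (m + kk) (by omega) (by omega)
  refine ⟨p + m • e, e, n, he, ?_, hSeq⟩
  rw [hSeq, Finset.card_image_of_injective _ hinj, Finset.card_range]

section MH
set_option linter.unusedSectionVars false
variable {A : Type*} [Fintype A] (η : ℤ × ℤ → A) (d : ℤ × ℤ)

/-- The `k`-window of `η` at `u` in direction `d`. -/
def window (k : ℕ) (u : ℤ × ℤ) : Fin k → A := fun i => η (u + (i : ℤ) • d)

noncomputable def wc (k : ℕ) : ℕ := (Set.range (window η d k)).ncard

lemma window_restrict (k : ℕ) (u : ℤ × ℤ) :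
    (fun (w : Fin (k+1) → A) (i : Fin k) => w i.castSucc) (window η d (k+1) u)
      = window η d k u := by
  funext i
  simp [window]

lemma wc_mono (k : ℕ) : wc η d k ≤ wc η d (k+1) := by
  have h : Set.range (window η d k)
      = (fun (w : Fin (k+1) → A) (i : Fin k) => w i.castSucc) '' Set.range (window η d (k+1)) := by
    ext w
    constructor
    · rintro ⟨u, rfl⟩
      exact ⟨window η d (k+1) u, ⟨u, rfl⟩, window_restrict η d k u⟩
    · rintro ⟨v, ⟨u, rfl⟩, rfl⟩
      exact ⟨u, (window_restrict η d k u).symm⟩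
  rw [wc, h]
  exact Set.ncard_image_le (Set.toFinite _)

lemma wc_one (hsurj : Function.Surjective η) : wc η d 1 = Fintype.card A := by
  classical
  have : Set.range (window η d 1) = Set.univ := by
    ext w
    simp only [Set.mem_range, Set.mem_univ, iff_true]
    obtain ⟨u0, hu0⟩ := hsurj (w 0)
    refine ⟨u0, ?_⟩
    funext i
    have : i = 0 := Subsingleton.elim _ _
    subst this
    simp [window, hu0]
  rw [wc, this, Set.ncard_univ, Nat.card_eq_fintype_card, Fintype.card_fun]
  simp

/-- If no level is stationary below `n`, the complexity grows linearly. -/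
lemma wc_exists_eq (hsurj : Function.Surjective η) (hA : 2 ≤ Fintype.card A)
    {n : ℕ} (hn : 1 ≤ n)
    (hbound : wc η d n ≤ n + Fintype.card A - 2) :
    ∃ k, 1 ≤ k ∧ wc η d (k+1) = wc η d k := by
  by_contra hcon
  push_neg at hcon
  have hstrict : ∀ k, 1 ≤ k → wc η d k < wc η d (k+1) :=
    fun k hk => lt_of_le_of_ne (wc_mono η d k) (fun h => hcon k hk h.symm)
  have hgrow : ∀ j : ℕ, Fintype.card A + j ≤ wc η d (1 + j) := by
    intro j
    induction j with
    | zero => simp [wc_one η d hsurj]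
    | succ j ih =>
        have := hstrict (1 + j) (by omega)
        have e : 1 + (j + 1) = (1 + j) + 1 := by omega
        rw [e]
        omega
  have h1 := hgrow (n - 1)
  have e : 1 + (n - 1) = n := by omega
  rw [e] at h1
  omega

lemma wc_det {k : ℕ} (heq : wc η d (k+1) = wc η d k) :
    ∀ u v : ℤ × ℤ, window η d k u = window η d k v →
      η (u + (k : ℤ) • d) = η (v + (k : ℤ) • d) := by
  intro u v huv
  have h : Set.range (window η d k)
      = (fun (w : Fin (k+1) → A) (i : Fin k) => w i.castSucc) '' Set.range (window η d (k+1)) := by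
    ext w
    constructor
    · rintro ⟨u, rfl⟩
      exact ⟨window η d (k+1) u, ⟨u, rfl⟩, window_restrict η d k u⟩
    · rintro ⟨v, ⟨u, rfl⟩, rfl⟩
      exact ⟨u, (window_restrict η d k u).symm⟩
  have hinj : Set.InjOn (fun (w : Fin (k+1) → A) (i : Fin k) => w i.castSucc)
      (Set.range (window η d (k+1))) := by
    apply Set.injOn_of_ncard_image_eq
    · rw [← h]
      exact heq.symm
    · exact Set.toFinite _
  have hw : window η d (k+1) u = window η d (k+1) v := by
    apply hinj ⟨u, rfl⟩ ⟨v, rfl⟩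
    rw [window_restrict, window_restrict]
    exact huv
  have := congrFun hw ⟨k, Nat.lt_succ_self k⟩
  simpa [window] using this

lemma window_shift {k : ℕ} (heq : wc η d (k+1) = wc η d k) :
    ∀ u v : ℤ × ℤ, window η d k u = window η d k v →
      window η d k (u + d) = window η d k (v + d) := by
  intro u v huv
  funext i
  show η (u + d + (i : ℤ) • d) = η (v + d + (i : ℤ) • d)
  have key : ∀ w : ℤ × ℤ, w + d + (i : ℤ) • d = w + ((i : ℤ) + 1) • d := by
    intro w
    rw [add_smul, one_smul]
    abel
  rw [key u, key v]
  rcases lt_or_eq_of_le (Nat.succ_le_of_lt i.2) with hlt | heqk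
  · have := congrFun huv ⟨(i : ℕ) + 1, hlt⟩
    simpa [window] using this
  · have e : ((i : ℕ) : ℤ) + 1 = (k : ℤ) := by exact_mod_cast congrArg Nat.cast heqk
    rw [e]
    exact wc_det η d heq u v huv

lemma window_shift_iter {k : ℕ} (heq : wc η d (k+1) = wc η d k) (N : ℕ) :
    ∀ u v : ℤ × ℤ, window η d k u = window η d k v →
      window η d k (u + (N : ℤ) • d) = window η d k (v + (N : ℤ) • d) := by
  induction N with
  | zero => intro u v huv; simpa using huv
  | succ N ih =>
      intro u v huv
      have h1 := window_shift η d heq _ _ (ih u v huv)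
      have e : ∀ w : ℤ × ℤ, w + (N : ℤ) • d + d = w + ((N : ℕ) + 1 : ℤ) • d := by
        intro w
        rw [add_smul, one_smul]
        abel
      rw [e u, e v] at h1
      convert h1 using 3 <;> push_cast <;> ring_nf

lemma eta_periodic_aux {k : ℕ} (hk : 1 ≤ k) (heq : wc η d (k+1) = wc η d k) :
    ∀ u : ℤ × ℤ, η (u + ((Nat.factorial (wc η d k) : ℤ)) • d) = η u := by
  classical
  intro u
  set m := wc η d k with hm
  -- pigeonhole
  have hcard : ((Set.toFinite (Set.range (window η d k))).toFinset).card = m := by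
    rw [← Set.ncard_eq_toFinset_card _ (Set.toFinite (Set.range (window η d k)))]
    rfl
  obtain ⟨i, hi, j, hj, hij, hfij⟩ :=
    Finset.exists_ne_map_eq_of_card_lt_of_maps_to
      (s := Finset.range (m+1))
      (t := (Set.toFinite (Set.range (window η d k))).toFinset)
      (f := fun j : ℕ => window η d k (u + ((j : ℤ) - (m : ℤ)) • d))
      (by rw [hcard, Finset.card_range]; omega)
      (by intro a _; simp)
  -- wlog i < j
  wlog hlt : i < j generalizing i j
  · exact this j hj i hi hij.symm hfij.symm (by omega)
  simp only [Finset.mem_range] at hi hj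
  set p := j - i with hp
  have hp1 : 1 ≤ p := by omega
  have hpm : p ≤ m := by omega
  -- equal windows at distance p
  have hbase : window η d k (u + ((i : ℤ) - (m : ℤ)) • d)
      = window η d k ((u + ((i : ℤ) - (m : ℤ)) • d) + (p : ℤ) • d) := by
    have : (u + ((j : ℤ) - (m : ℤ)) • d) = (u + ((i : ℤ) - (m : ℤ)) • d) + (p : ℤ) • d := by
      have : ((j : ℤ) - (m : ℤ)) = ((i : ℤ) - (m : ℤ)) + (p : ℤ) := by
        push_cast [hp, Nat.cast_sub (le_of_lt hlt)]
        ring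
      rw [this, add_smul]
      abel
    rw [← this]
    exact hfij
  -- shift to u
  have hu : window η d k u = window η d k (u + (p : ℤ) • d) := by
    have h1 := window_shift_iter η d heq (m - i) _ _ hbase
    have ei : ((m - i : ℕ) : ℤ) = (m : ℤ) - (i : ℤ) := by
      rw [Nat.cast_sub (by omega)]
    have e1 : (u + ((i : ℤ) - (m : ℤ)) • d) + ((m - i : ℕ) : ℤ) • d = u := by
      rw [ei]; module
    have e2 : ((u + ((i : ℤ) - (m : ℤ)) • d) + (p : ℤ) • d) + ((m - i : ℕ) : ℤ) • d
        = u + (p : ℤ) • d := by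
      rw [ei]; module
    rw [e1, e2] at h1
    exact h1
  -- iterate q times
  have hiter : ∀ q : ℕ, window η d k u = window η d k (u + ((q * p : ℕ) : ℤ) • d) := by
    intro q
    induction q with
    | zero => simp
    | succ q ih =>
        have h1 := window_shift_iter η d heq (q * p) _ _ hu
        rw [← ih] at h1
        rw [h1]
        congr 1
        rw [add_assoc, ← add_smul]
        congr 1
        push_cast
        ring
  have hdvd : p ∣ Nat.factorial m := Nat.dvd_factorial hp1 hpm
  obtain ⟨q, hq⟩ := hdvd
  have := hiter q
  rw [(by rw [hq]; ring : q * p = Nat.factorial m)] at this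
  have h0 := congrFun this ⟨0, hk⟩
  simp only [window] at h0
  simpa using h0.symm

/-- Morse–Hedlund-type conclusion: low complexity in direction `d` forces periodicity. -/
lemma periodic_of_wc_le (hsurj : Function.Surjective η) (hA : 2 ≤ Fintype.card A)
    (hd : d ≠ 0) {n : ℕ} (hn : 1 ≤ n)
    (hbound : wc η d n ≤ n + Fintype.card A - 2) :
    ∃ h : ℤ × ℤ, h ≠ 0 ∧ ∀ g : ℤ × ℤ, η (g + h) = η g := by
  obtain ⟨k, hk, heq⟩ := wc_exists_eq η d hsurj hA hn hbound
  refine ⟨((Nat.factorial (wc η d k) : ℤ)) • d, ?_, fun g => eta_periodic_aux η d hk heq g⟩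
  apply smul_ne_zero _ hd
  exact_mod_cast Nat.factorial_ne_zero _

end MH
lemma wc_le_patternCount {A : Type*} [Fintype A] (η : ℤ × ℤ → A) (a e : ℤ × ℤ) (n : ℕ)
    (S : Finset (ℤ × ℤ)) (hS : S = (Finset.range n).image (fun t : ℕ => a + (t : ℤ) • e)) :
    wc η e n ≤ patternCount η S := by
  classical
  have hmem : ∀ i : Fin n, a + (i : ℤ) • e ∈ S := by
    intro i
    rw [hS]
    exact Finset.mem_image.mpr ⟨i, Finset.mem_range.mpr i.2, rfl⟩
  set Pat := {w : (↥S) → A | ∃ u : ℤ × ℤ, ∀ s : ↥S, w s = η (u + (s : ℤ × ℤ))} with hPat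
  set Φ : ((↥S) → A) → (Fin n → A) := fun w i => w ⟨a + (i : ℤ) • e, hmem i⟩ with hΦ
  have hsub : Set.range (window η e n) ⊆ Φ '' Pat := by
    rintro w ⟨u, rfl⟩
    refine ⟨fun s => η ((u - a) + (s : ℤ × ℤ)), ⟨u - a, fun s => rfl⟩, ?_⟩
    funext i
    show η ((u - a) + (a + (i : ℤ) • e)) = η (u + (i : ℤ) • e)
    congr 1
    abel
  calc wc η e n ≤ (Φ '' Pat).ncard := Set.ncard_le_ncard hsub (Set.toFinite _)
    _ ≤ Pat.ncard := Set.ncard_image_le (patternSet_finite η S)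

lemma periodic_of_collinear {A : Type*} [Fintype A] (hA : 2 ≤ Fintype.card A)
    (η : ℤ × ℤ → A) (hsurj : Function.Surjective η) (S : Finset (ℤ × ℤ))
    (hconv : IsLatticeConvex S) (hcol : Collinear ℝ (emb '' (S : Set (ℤ × ℤ))))
    (hcard : 2 ≤ S.card) (hbound : patternCount η S ≤ S.card + Fintype.card A - 2) :
    ∃ h : ℤ × ℤ, h ≠ 0 ∧ ∀ g : ℤ × ℤ, η (g + h) = η g := by
  obtain ⟨a, e, n, he, hn, hSeq⟩ := collinear_convex_struct S hconv hcol hcard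
  have h1 : wc η e n ≤ n + Fintype.card A - 2 := by
    have := wc_le_patternCount η a e n S hSeq
    omega
  exact periodic_of_wc_le η e hsurj hA he (by omega) h1

/-- Existence of mlc `η`-generating sets: a minimal convex subset `S ⊆ U` with
`P_η(S) ≤ (1/2)|S| + |A| - 1` exists, has at least two points, is `η`-generating, and,
if `η` is aperiodic, its convex hull has positive area (it is not collinear). -/
theorem exists_mlc_generating
    {A : Type*} [Fintype A] (hA : 2 ≤ Fintype.card A)
    (η : ℤ × ℤ → A) (hsurj : Function.Surjective η)
    (U : Finset (ℤ × ℤ)) (hUne : U.Nonempty) (hUconv : IsLatticeConvex U)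
    (hU : (patternCount η U : ℚ) ≤ (1 / 2) * U.card + Fintype.card A - 1) :
    ∃ S : Finset (ℤ × ℤ), S ⊆ U ∧ IsLatticeConvex S ∧ S.Nonempty ∧ 2 ≤ S.card ∧
      (patternCount η S : ℚ) ≤ (1 / 2) * S.card + Fintype.card A - 1 ∧
      (∀ T : Finset (ℤ × ℤ), T ⊆ S → IsLatticeConvex T → T.Nonempty →
        (patternCount η T : ℚ) ≤ (1 / 2) * T.card + Fintype.card A - 1 → T = S) ∧
      (∀ g ∈ S, IsLatticeConvex (S.erase g) →
        patternCount η S = patternCount η (S.erase g)) ∧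
      ((¬ ∃ h : ℤ × ℤ, h ≠ 0 ∧ ∀ g : ℤ × ℤ, η (g + h) = η g) →
        ¬ Collinear ℝ (emb '' (S : Set (ℤ × ℤ)))) := by
  classical
  set good : Finset (ℤ × ℤ) → Prop := fun T =>
    T ⊆ U ∧ IsLatticeConvex T ∧ T.Nonempty ∧
      (patternCount η T : ℚ) ≤ (1 / 2) * T.card + Fintype.card A - 1 with hgood_def
  have hex : ∃ n : ℕ, ∃ T, good T ∧ T.card = n :=
    ⟨U.card, U, ⟨subset_rfl, hUconv, hUne, hU⟩, rfl⟩
  obtain ⟨S, hgoodS, hcardS⟩ := Nat.find_spec hex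
  have hmin : ∀ T, good T → S.card ≤ T.card := by
    intro T hT
    rw [hcardS]
    exact Nat.find_le ⟨T, hT, rfl⟩
  obtain ⟨hSsub, hSconv, hSne, hSbound⟩ := hgoodS
  -- at least two points
  have h2 : 2 ≤ S.card := by
    by_contra hcon
    have hc1 : S.card = 1 := by
      have := Finset.card_pos.mpr hSne
      omega
    obtain ⟨g, hg⟩ := Finset.card_eq_one.mp hc1
    rw [hg] at hSbound
    rw [patternCount_singleton η hsurj g] at hSbound
    simp only [Finset.card_singleton, Nat.cast_one] at hSbound
    linarith
  refine ⟨S, hSsub, hSconv, hSne, h2, hSbound, ?_, ?_, ?_⟩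
  · -- minimality
    intro T hTS hTconv hTne hTbound
    exact Finset.eq_of_subset_of_card_le hTS
      (hmin T ⟨hTS.trans hSsub, hTconv, hTne, hTbound⟩)
  · -- generating
    intro g hg hconv'
    have hce : (S.erase g).card = S.card - 1 := Finset.card_erase_of_mem hg
    have hene : (S.erase g).Nonempty := Finset.card_pos.mp (by omega)
    have hnb : ¬ ((patternCount η (S.erase g) : ℚ) ≤
        (1 / 2) * (S.erase g).card + Fintype.card A - 1) := by
      intro hb
      have := hmin (S.erase g) ⟨(Finset.erase_subset g S).trans hSsub, hconv', hene, hb⟩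
      omega
    push_neg at hnb
    have hmono : patternCount η (S.erase g) ≤ patternCount η S :=
      patternCount_mono η (Finset.erase_subset g S)
    have hcast : ((S.erase g).card : ℚ) = (S.card : ℚ) - 1 := by
      rw [hce]
      have : 1 ≤ S.card := by omega
      push_cast [Nat.cast_sub this]
      ring
    rw [hcast] at hnb
    -- both counts lie in an interval of length 1/2
    have : patternCount η S ≤ patternCount η (S.erase g) := by
      by_contra hlt
      push_neg at hlt
      have h1 : (patternCount η (S.erase g) : ℚ) + 1 ≤ (patternCount η S : ℚ) := by
        exact_mod_cast hlt
      linarith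
    omega
  · -- aperiodic implies positive area
    intro haper hcol
    apply haper
    apply periodic_of_collinear hA η hsurj S hSconv hcol h2
    have hK : (2 : ℕ) ≤ S.card + Fintype.card A := by omega
    have hcast : ((S.card + Fintype.card A - 2 : ℕ) : ℚ)
        = (S.card : ℚ) + (Fintype.card A : ℚ) - 2 := by
      push_cast [Nat.cast_sub hK]
      ring
    have hq : (patternCount η S : ℚ) ≤ ((S.card + Fintype.card A - 2 : ℕ) : ℚ) := by
      rw [hcast]
      have hc2 : (2 : ℚ) ≤ (S.card : ℚ) := by exact_mod_cast h2
      linarith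
    exact_mod_cast hq
end

section
/- Let η : ℤ² → A whose range is A (|A| ≥ 2), and let S be an mlc η-generating set whose convex hull has positive area. If ℓ ∈ 𝔾₁ is a one-sided nonexpansive direction on X_η, then |ℓ_S ∩ S| ≥ 3. -/
/-- Cross product of lattice vectors; the half plane of the oriented line through the
origin with direction `v` is `{g : 0 ≤ cross v g}`. -/
def cross (v g : ℤ × ℤ) : ℤ := v.1 * g.2 - v.2 * g.1

lemma cross_sub (v a b : ℤ × ℤ) : cross v (a - b) = cross v a - cross v b := by
  simp only [cross, Prod.fst_sub, Prod.snd_sub]; ring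

lemma cross_add (v a b : ℤ × ℤ) : cross v (a + b) = cross v a + cross v b := by
  simp only [cross, Prod.fst_add, Prod.snd_add]; ring

lemma closure_pattern {A : Type*} [TopologicalSpace A] [DiscreteTopology A]
    (η : ℤ × ℤ → A) (x : ℤ × ℤ → A)
    (hx : x ∈ closure {y : ℤ × ℤ → A | ∃ u : ℤ × ℤ, y = fun g => η (g + u)})
    (F : Finset (ℤ × ℤ)) : ∃ u, ∀ g ∈ F, x g = η (g + u) := by
  have hU : IsOpen {z : ℤ × ℤ → A | ∀ g ∈ F, z g = x g} := by
    have he : {z : ℤ × ℤ → A | ∀ g ∈ F, z g = x g}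
        = ⋂ g ∈ F, (fun z : ℤ × ℤ → A => z g) ⁻¹' {x g} := by
      ext z; simp
    rw [he]
    exact isOpen_biInter_finset fun g _ =>
      (continuous_apply g).isOpen_preimage _ (isOpen_discrete _)
  rcases mem_closure_iff.mp hx _ hU (fun g _ => rfl) with ⟨z, hzU, u, rfl⟩
  exact ⟨u, fun g hg => (hzU g hg).symm⟩

/-- Key step: the pattern count strictly drops when removing the support line. -/
lemma pattern_drop {A : Type*} [Fintype A] [TopologicalSpace A] [DiscreteTopology A]
    (η : ℤ × ℤ → A) (S T : Finset (ℤ × ℤ)) (hTS : T ⊆ S)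
    (v : ℤ × ℤ) (g₀ : ℤ × ℤ) (hg₀ : g₀ ∈ S)
    (hTpos : ∀ t ∈ T, 0 < cross v (t - g₀))
    (hnonexp : ∃ x ∈ closure {y : ℤ × ℤ → A | ∃ u : ℤ × ℤ, y = fun g => η (g + u)},
      ∃ y ∈ closure {y : ℤ × ℤ → A | ∃ u : ℤ × ℤ, y = fun g => η (g + u)},
        x ≠ y ∧ ∀ g : ℤ × ℤ, 0 ≤ cross v g → x g = y g) :
    patternCount η T + 1 ≤ patternCount η S := by
  classical
  obtain ⟨x, hx, y, hy, hxy, hagree⟩ := hnonexp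
  obtain ⟨gd, hgd⟩ := Function.ne_iff.mp hxy
  -- the greatest cross value of a disagreement point
  obtain ⟨c, ⟨g₁, hg₁ne, hg₁c⟩, hcmax⟩ :=
    Int.exists_greatest_of_bdd (P := fun c => ∃ g, x g ≠ y g ∧ cross v g = c)
      ⟨0, by rintro z ⟨g, hgne, rfl⟩
             by_contra h
             exact hgne (hagree g (by omega))⟩
      ⟨cross v gd, gd, hgd, rfl⟩
  have hmaxagree : ∀ g, c < cross v g → x g = y g := by
    intro g h
    by_contra hne'
    have := hcmax (cross v g) ⟨g, hne', rfl⟩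
    omega
  set u : ℤ × ℤ := g₁ - g₀ with hu
  set w₁ : (↥S) → A := fun s => x (u + (s : ℤ × ℤ)) with hw₁
  set w₂ : (↥S) → A := fun s => y (u + (s : ℤ × ℤ)) with hw₂
  have hune : w₁ ≠ w₂ := by
    intro h
    apply hg₁ne
    have := congrFun h ⟨g₀, hg₀⟩
    simpa [hw₁, hw₂, hu, sub_add_cancel] using this
  -- restriction map
  set r : ((↥S) → A) → ((↥T) → A) := fun w t => w ⟨(t : ℤ × ℤ), hTS t.2⟩ with hr
  have hrestr : r w₁ = r w₂ := by
    funext t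
    have ht : 0 < cross v ((t : ℤ × ℤ) - g₀) := hTpos _ t.2
    have hc : c < cross v (u + (t : ℤ × ℤ)) := by
      have : u + (t : ℤ × ℤ) = g₁ + ((t : ℤ × ℤ) - g₀) := by rw [hu]; ring
      rw [this, cross_add, hg₁c]
      omega
    simpa [hr, hw₁, hw₂] using hmaxagree _ hc
  set PatS := {w : (↥S) → A | ∃ u : ℤ × ℤ, ∀ s : ↥S, w s = η (u + (s : ℤ × ℤ))} with hPatS
  set PatT := {w : (↥T) → A | ∃ u : ℤ × ℤ, ∀ s : ↥T, w s = η (u + (s : ℤ × ℤ))} with hPatT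
  have hmem : ∀ z ∈ closure {y : ℤ × ℤ → A | ∃ u : ℤ × ℤ, y = fun g => η (g + u)},
      (fun s : ↥S => z (u + (s : ℤ × ℤ))) ∈ PatS := by
    intro z hz
    obtain ⟨u₂, hu₂⟩ := closure_pattern η z hz (S.image (u + ·))
    refine ⟨u₂ + u, fun s => ?_⟩
    have : z (u + (s : ℤ × ℤ)) = η ((u + (s : ℤ × ℤ)) + u₂) :=
      hu₂ _ (Finset.mem_image.mpr ⟨s, s.2, rfl⟩)
    show z (u + (s : ℤ × ℤ)) = η ((u₂ + u) + (s : ℤ × ℤ))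
    rw [this]
    congr 1
    ring
  have hw₁mem : w₁ ∈ PatS := hmem x hx
  have hw₂mem : w₂ ∈ PatS := hmem y hy
  have hsub : PatT ⊆ r '' (PatS \ {w₂}) := by
    rintro p ⟨u', hp⟩
    set w : (↥S) → A := fun s => η (u' + (s : ℤ × ℤ)) with hwdef
    have hwmem : w ∈ PatS := ⟨u', fun s => rfl⟩
    have hrw : r w = p := funext fun t => (hp t).symm
    by_cases hww : w = w₂
    · exact ⟨w₁, ⟨hw₁mem, by simp [hune]⟩, by rw [hrestr, ← hww, hrw]⟩
    · exact ⟨w, ⟨hwmem, hww⟩, hrw⟩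
  have h1 : PatT.ncard ≤ (PatS \ {w₂}).ncard :=
    le_trans (Set.ncard_le_ncard hsub (Set.toFinite _)) (Set.ncard_image_le (Set.toFinite _))
  have h2 : (PatS \ {w₂}).ncard + 1 = PatS.ncard :=
    Set.ncard_diff_singleton_add_one hw₂mem (Set.toFinite _)
  have : patternCount η T = PatT.ncard := rfl
  have hS' : patternCount η S = PatS.ncard := rfl
  omega

/-- For an mlc `η`-generating set `S` of positive area and a one-sided nonexpansive
direction `ℓ` (of direction `v`) on `X_η`, the supporting line `ℓ_S` contains at least
three points of `S`. -/
theorem mlc_support_line_card_ge_three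
    {A : Type*} [Fintype A] [TopologicalSpace A] [DiscreteTopology A]
    (hA : 2 ≤ Fintype.card A)
    (η : ℤ × ℤ → A) (hsurj : Function.Surjective η)
    (S : Finset (ℤ × ℤ)) (hSne : S.Nonempty) (hSconv : IsLatticeConvex S)
    (hgen : ∀ g ∈ S, IsLatticeConvex (S.erase g) →
      patternCount η S = patternCount η (S.erase g))
    (hmlc1 : (patternCount η S : ℚ) ≤ (1 / 2) * S.card + Fintype.card A - 1)
    (hmlc2 : ∀ T : Finset (ℤ × ℤ), T ⊆ S → T ≠ S → T.Nonempty → IsLatticeConvex T →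
      ((1 : ℚ) / 2) * T.card + Fintype.card A - 1 < patternCount η T)
    (harea : ¬ Collinear ℝ (emb '' (S : Set (ℤ × ℤ))))
    (v : ℤ × ℤ) (hv : v ≠ 0)
    (hnonexp : ∃ x ∈ closure {y : ℤ × ℤ → A | ∃ u : ℤ × ℤ, y = fun g => η (g + u)},
      ∃ y ∈ closure {y : ℤ × ℤ → A | ∃ u : ℤ × ℤ, y = fun g => η (g + u)},
        x ≠ y ∧ ∀ g : ℤ × ℤ, 0 ≤ cross v g → x g = y g)
    (g₀ : ℤ × ℤ) (hg₀ : g₀ ∈ S) (hsupp : ∀ s ∈ S, 0 ≤ cross v (s - g₀)) :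
    3 ≤ (S.filter fun s => cross v (s - g₀) = 0).card := by
  classical
  by_contra hcard
  push_neg at hcard
  set L := S.filter fun s => cross v (s - g₀) = 0 with hL
  set T := S.filter fun s => ¬ (cross v (s - g₀) = 0) with hT
  have hTS : T ⊆ S := Finset.filter_subset _ _
  have hcards : L.card + T.card = S.card :=
    Finset.card_filter_add_card_filter_not _
  have hTpos : ∀ t ∈ T, 0 < cross v (t - g₀) := by
    intro t ht
    rcases Finset.mem_filter.mp ht with ⟨htS, htne⟩
    exact lt_of_le_of_ne (hsupp t htS) (Ne.symm htne)
  have hg₀T : g₀ ∉ T := by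
    intro h; exact (Finset.mem_filter.mp h).2 (by simp [cross])
  have hTneS : T ≠ S := fun h => hg₀T (h ▸ hg₀)
  -- T is nonempty, else S would be collinear
  have hTne : T.Nonempty := by
    rw [Finset.nonempty_iff_ne_empty]
    intro hTe
    apply harea
    have hall : ∀ s ∈ S, cross v (s - g₀) = 0 := by
      intro s hs
      by_contra hcr
      have : s ∈ T := Finset.mem_filter.mpr ⟨hs, hcr⟩
      simp [hTe] at this
    have hmemim : emb g₀ ∈ emb '' (S : Set (ℤ × ℤ)) := ⟨g₀, by exact_mod_cast hg₀, rfl⟩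
    rw [collinear_iff_of_mem hmemim]
    refine ⟨((v.1 : ℝ), (v.2 : ℝ)), ?_⟩
    rintro p ⟨s, hs, rfl⟩
    have h0 : (v.1 : ℝ) * (s.2 - g₀.2) - v.2 * (s.1 - g₀.1) = 0 := by
      have h := hall s hs
      simp only [cross, Prod.fst_sub, Prod.snd_sub] at h
      exact_mod_cast h
    have hv' : (v.1 : ℝ) ≠ 0 ∨ (v.2 : ℝ) ≠ 0 := by
      rcases v with ⟨a, b⟩
      simp only [Prod.mk.injEq, ne_eq, Prod.ext_iff] at hv ⊢
      push_cast
      by_contra h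
      push_neg at h
      exact hv ⟨by exact_mod_cast h.1, by exact_mod_cast h.2⟩
    rcases hv' with h1 | h2
    · refine ⟨(s.1 - g₀.1 : ℤ) / (v.1 : ℝ), ?_⟩
      have : (emb s).1 = ((s.1 - g₀.1 : ℤ) / (v.1 : ℝ)) * v.1 + (emb g₀).1 ∧
          (emb s).2 = ((s.1 - g₀.1 : ℤ) / (v.1 : ℝ)) * v.2 + (emb g₀).2 := by
        constructor
        · simp only [emb]; field_simp; push_cast; ring
        · simp only [emb]; field_simp; push_cast at h0 ⊢; nlinarith [h0]
      exact Prod.ext this.1 this.2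
    · refine ⟨(s.2 - g₀.2 : ℤ) / (v.2 : ℝ), ?_⟩
      have : (emb s).1 = ((s.2 - g₀.2 : ℤ) / (v.2 : ℝ)) * v.1 + (emb g₀).1 ∧
          (emb s).2 = ((s.2 - g₀.2 : ℤ) / (v.2 : ℝ)) * v.2 + (emb g₀).2 := by
        constructor
        · simp only [emb]; field_simp; push_cast at h0 ⊢; nlinarith [h0]
        · simp only [emb]; field_simp; push_cast; ring
      exact Prod.ext this.1 this.2
  -- T is lattice convex
  have hTconv : IsLatticeConvex T := by
    intro g hg
    have hsubhull : convexHull ℝ (emb '' (T : Set (ℤ × ℤ)))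
        ⊆ convexHull ℝ (emb '' (S : Set (ℤ × ℤ))) :=
      convexHull_mono (Set.image_mono (by exact_mod_cast hTS))
    have hgS : g ∈ S := hSconv g (hsubhull hg)
    have hlin : IsLinearMap ℝ (fun p : ℝ × ℝ => (v.1 : ℝ) * p.2 - (v.2 : ℝ) * p.1) := by
      constructor
      · intro a b; simp only [Prod.fst_add, Prod.snd_add]; ring
      · intro c a; simp only [Prod.smul_fst, Prod.smul_snd, smul_eq_mul]; ring
    have hhalf : Convex ℝ {p : ℝ × ℝ | (cross v g₀ : ℝ) + 1 ≤ (v.1 : ℝ) * p.2 - (v.2 : ℝ) * p.1} :=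
      convex_halfSpace_ge hlin _
    have hTin : emb '' (T : Set (ℤ × ℤ))
        ⊆ {p : ℝ × ℝ | (cross v g₀ : ℝ) + 1 ≤ (v.1 : ℝ) * p.2 - (v.2 : ℝ) * p.1} := by
      rintro p ⟨t, ht, rfl⟩
      have h1 : 0 < cross v (t - g₀) := hTpos t ht
      rw [cross_sub] at h1
      have : cross v g₀ + 1 ≤ cross v t := by omega
      simp only [emb, Set.mem_setOf_eq]
      have : (cross v g₀ : ℝ) + 1 ≤ (cross v t : ℝ) := by exact_mod_cast this
      simpa [cross] using this
    have hgin := convexHull_min hTin hhalf hg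
    have : cross v g₀ + 1 ≤ cross v g := by
      have : (cross v g₀ : ℝ) + 1 ≤ (cross v g : ℝ) := by
        simpa [emb, cross] using hgin
      exact_mod_cast this
    refine Finset.mem_filter.mpr ⟨hgS, ?_⟩
    rw [cross_sub]
    omega
  -- now the counting
  have hkey := pattern_drop η S T hTS v g₀ hg₀ hTpos hnonexp
  have hmT := hmlc2 T hTS hTneS hTne hTconv
  have hScard : (S.card : ℚ) ≤ (T.card : ℚ) + 2 := by
    exact_mod_cast (by omega : S.card ≤ T.card + 2)
  have hkeyQ : (patternCount η T : ℚ) + 1 ≤ (patternCount η S : ℚ) := by exact_mod_cast hkey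
  linarith
end
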